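/- Let ℓ ≥ 1, let n : Fin ℓ → ℕ, and let G = ∏_{i : Fin ℓ} FreeGroup (Fin (n i)) be a finite direct product of free groups. Let χ : G →* ℂˣ be a character, and let ℂ_χ be the one-dimensional representation of G on ℂ where g acts by multiplication by χ g. Let S = {i : Fin ℓ | the composition of χ with the canonical inclusion FreeGroup (Fin (n i)) →* G is nontrivial}. Then: (a) if S has at least two elements, the first group cohomology H¹(G, ℂ_χ) is the zero module; (b) if S = {i₀}, then finrank ℂ H¹(G, ℂ_χ) = n i₀ − 1; and (c) if S = ∅ (i.e., χ is trivial), then finrank ℂ H¹(G, ℂ_χ) = Σ_i n i. (This computes the cohomology support loci W¹_k of a product of free groups: W¹_k consists of the ℓ coordinate pieces coming from the factors with n i ≥ k+1, together with the trivial character.) -/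

import Mathlib

/-!
First group cohomology of a finite direct product of free groups with
coefficients in a rank-one representation given by a character `χ`.
-/

noncomputable section

/-- The one-dimensional representation of `G` on `ℂ` associated to a character
`χ : G →* ℂˣ`: the element `g` acts by multiplication by `χ g`. -/
def charRep {G : Type*} [Monoid G] (χ : G →* ℂˣ) : Representation ℂ G ℂ where
  toFun g := (χ g : ℂ) • LinearMap.id
  map_one' := by
    simp only [map_one, Units.val_one, one_smul]
    rfl
  map_mul' g h := by
    ext
    simp [Module.End.mul_apply, smul_smul, mul_comm]

namespace H1Aux

open groupCohomology

section Compat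
variable {k G : Type} [CommRing k] [Group G]

/-- One-cocycles as a submodule of `G → A`. -/
abbrev oneCocycles (A : Rep k G) := cocycles₁ A

/-- The zeroth differential as a linear map. -/
abbrev dZero (A : Rep k G) : A →ₗ[k] (G → A) := (d₀₁ A).hom

/-- The first differential as a linear map. -/
abbrev dOne (A : Rep k G) : (G → A) →ₗ[k] (G × G → A) := (d₁₂ A).hom

theorem dOne_comp_dZero (A : Rep k G) : dOne A ∘ₗ dZero A = 0 := by
  show (d₁₂ A).hom ∘ₗ (d₀₁ A).hom = 0
  rw [← ModuleCat.hom_comp, d₀₁_comp_d₁₂, ModuleCat.hom_zero]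

theorem dZero_apply {A : Rep k G} (x : A) (g : G) : dZero A x g = A.ρ g x - x := rfl

/-- One-coboundaries as a submodule of the one-cocycles. -/
def oneCoboundaries (A : Rep k G) : Submodule k (oneCocycles A) :=
  LinearMap.range ((dZero A).codRestrict (oneCocycles A)
    fun c => LinearMap.ext_iff.1 (dOne_comp_dZero A) c)

theorem mem_oneCocycles_iff {A : Rep k G} (f : G → A) :
    f ∈ oneCocycles A ↔ ∀ g h : G, f (g * h) = A.ρ g (f h) + f g :=
  mem_cocycles₁_iff f

theorem oneCocycles_map_one {A : Rep k G} (f : oneCocycles A) : f 1 = 0 :=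
  cocycles₁_map_one f

theorem mem_oneCoboundaries_iff {A : Rep k G} (f : oneCocycles A) :
    f ∈ oneCoboundaries A ↔ ∃ x : A, ∀ g : G, A.ρ g x - x = f g := by
  constructor
  · rintro ⟨x, rfl⟩
    exact ⟨x, fun g => (dZero_apply x g).symm⟩
  · rintro ⟨x, hx⟩
    exact ⟨x, Subtype.ext (funext fun g => (dZero_apply x g).trans (hx g))⟩

theorem ker_H1π (A : Rep k G) : LinearMap.ker (H1π A).hom = oneCoboundaries A := by
  ext x
  rw [LinearMap.mem_ker]
  change H1π A x = 0 ↔ _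
  rw [H1π_eq_zero_iff, coboundaries₁, LinearMap.mem_range, mem_oneCoboundaries_iff]
  constructor
  · rintro ⟨c, hc⟩
    exact ⟨c, fun g => by rw [← dZero_apply]; exact congrFun hc g⟩
  · rintro ⟨c, hc⟩
    exact ⟨c, funext fun g => by rw [← hc g, ← dZero_apply]⟩

theorem H1π_surj (A : Rep k G) : Function.Surjective (H1π A).hom := fun x =>
  H1_induction_on (C := fun x => ∃ y, (H1π A).hom y = x) x fun y => ⟨y, rfl⟩

/-- `H¹` as the quotient of cocycles by coboundaries. -/
def h1Equiv (A : Rep k G) : (oneCocycles A ⧸ oneCoboundaries A) ≃ₗ[k] H1 A :=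
  (Submodule.quotEquivOfEq _ _ (ker_H1π A).symm).trans
    (LinearMap.quotKerEquivOfSurjective (H1π A).hom (H1π_surj A))

end Compat

/-- The action of `ℂˣ` on `Multiplicative ℂ` by scaling. -/
def affAct : ℂˣ →* MulAut (Multiplicative ℂ) where
  toFun u :=
    { toFun := fun a => Multiplicative.ofAdd ((u : ℂ) * a.toAdd)
      invFun := fun a => Multiplicative.ofAdd (((u⁻¹ : ℂˣ) : ℂ) * a.toAdd)
      left_inv := fun a => by simp [← mul_assoc, ← Units.val_mul]
      right_inv := fun a => by simp [← mul_assoc, ← Units.val_mul]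
      map_mul' := fun a b => by simp [mul_add, ofAdd_add] }
  map_one' := by ext a; simp
  map_mul' u w := by ext a; simp [mul_assoc]

/-- A `χ'`-twisted cocycle on a free group may be freely prescribed on generators. -/
theorem exists_cocycle {α : Type*} (χ' : FreeGroup α →* ℂˣ) (v : α → ℂ) :
    ∃ f : FreeGroup α → ℂ, (∀ g h, f (g * h) = (χ' g : ℂ) * f h + f g) ∧
      ∀ k, f (FreeGroup.of k) = v k := by
  let Ψ : FreeGroup α →* Multiplicative ℂ ⋊[affAct] ℂˣ :=
    FreeGroup.lift fun k =>
      ⟨Multiplicative.ofAdd (v k), χ' (FreeGroup.of k)⟩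
  have hright : ∀ g, (Ψ g).right = χ' g := by
    have : SemidirectProduct.rightHom.comp Ψ = χ' :=
      FreeGroup.ext_hom _ _ fun k => by simp [Ψ, SemidirectProduct.rightHom]
    intro g
    exact DFunLike.congr_fun this g
  refine ⟨fun g => Multiplicative.toAdd (Ψ g).left, fun g h => ?_, fun k => ?_⟩
  · show Multiplicative.toAdd (Ψ (g * h)).left = _
    rw [map_mul, SemidirectProduct.mul_left, toAdd_mul, hright]
    show Multiplicative.toAdd (Ψ g).left + (χ' g : ℂ) * Multiplicative.toAdd (Ψ h).left = _
    ring
  · show Multiplicative.toAdd (Ψ (FreeGroup.of k)).left = v k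
    simp [Ψ]

variable {G : Type} [Group G] {χ : G →* ℂˣ}

theorem ρ_apply (χ : G →* ℂˣ) (g : G) (v : ℂ) :
    ((Rep.of (charRep χ)).ρ g) v = (χ g : ℂ) * v := rfl

/-- View a one-cocycle as a plain function `G → ℂ`. -/
def cf (χ : G →* ℂˣ) (f : oneCocycles (Rep.of (charRep χ))) : G → ℂ := f.1

theorem cocycle_mul (f : oneCocycles (Rep.of (charRep χ))) (g h : G) :
    cf χ f (g * h) = (χ g : ℂ) * cf χ f h + cf χ f g :=
  (mem_oneCocycles_iff (A := Rep.of (charRep χ)) f.1).1 f.2 g h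

theorem cf_one (f : oneCocycles (Rep.of (charRep χ))) : cf χ f 1 = 0 :=
  oneCocycles_map_one f

/-- Make a one-cocycle out of a function satisfying the cocycle identity. -/
def mk (χ : G →* ℂˣ) (F : G → ℂ) (hF : ∀ g h, F (g * h) = (χ g : ℂ) * F h + F g) :
    oneCocycles (Rep.of (charRep χ)) :=
  ⟨F, (mem_oneCocycles_iff (A := Rep.of (charRep χ)) F).2 hF⟩

theorem cf_mk (χ : G →* ℂˣ) (F : G → ℂ) (hF) : cf χ (mk χ F hF) = F := rfl

theorem cocycle_inv (f : oneCocycles (Rep.of (charRep χ))) (g : G) :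
    cf χ f g⁻¹ = -(((χ g)⁻¹ : ℂˣ) : ℂ) * cf χ f g := by
  have h0 : cf χ f (g * g⁻¹) = 0 := by rw [mul_inv_cancel]; exact cf_one f
  rw [cocycle_mul] at h0
  have hne : (χ g : ℂ) ≠ 0 := Units.ne_zero _
  have hu : (χ g : ℂ) * ((χ g : ℂ))⁻¹ = 1 := mul_inv_cancel₀ hne
  rw [Units.val_inv_eq_inv_val]
  apply mul_left_cancel₀ hne
  linear_combination h0 + cf χ f g * hu

theorem dZero_apply'' (χ : G →* ℂˣ) (c : ℂ) (g : G) :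
    dZero (Rep.of (charRep χ)) c g = (χ g : ℂ) * c - c := by
  rw [dZero_apply, ρ_apply]

theorem mem_coboundaries_of_eq (f : oneCocycles (Rep.of (charRep χ))) (c : ℂ)
    (h : ∀ g, cf χ f g = ((χ g : ℂ) - 1) * c) :
    f ∈ oneCoboundaries (Rep.of (charRep χ)) :=
  (mem_oneCoboundaries_iff f).2 ⟨c, fun g => by
    show (χ g : ℂ) * c - c = cf χ f g
    rw [h g]; ring⟩

section Product
variable {ℓ : ℕ} {n : Fin ℓ → ℕ} {χ : (∀ i : Fin ℓ, FreeGroup (Fin (n i))) →* ℂˣ}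

theorem comm_rel (f : oneCocycles (Rep.of (charRep χ))) {i j : Fin ℓ} (hij : i ≠ j)
    (a : FreeGroup (Fin (n i))) (b : FreeGroup (Fin (n j))) :
    ((χ (Pi.mulSingle i a) : ℂ) - 1) * cf χ f (Pi.mulSingle j b) =
      ((χ (Pi.mulSingle j b) : ℂ) - 1) * cf χ f (Pi.mulSingle i a) := by
  have hc : (Pi.mulSingle i a : ∀ j, FreeGroup (Fin (n j))) * Pi.mulSingle j b
      = Pi.mulSingle j b * Pi.mulSingle i a :=
    (Pi.mulSingle_commute (f := fun j => FreeGroup (Fin (n j))) hij a b).eq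
  have h1 := cocycle_mul f (Pi.mulSingle i a) (Pi.mulSingle j b)
  have h2 := cocycle_mul f (Pi.mulSingle j b) (Pi.mulSingle i a)
  rw [hc] at h1
  linear_combination h2 - h1

theorem factor_ext (f : oneCocycles (Rep.of (charRep χ))) (i : Fin ℓ) (c : ℂ)
    (h : ∀ k, cf χ f (Pi.mulSingle i (FreeGroup.of k)) =
      ((χ (Pi.mulSingle i (FreeGroup.of k)) : ℂ) - 1) * c)
    (x : FreeGroup (Fin (n i))) :
    cf χ f (Pi.mulSingle i x) = ((χ (Pi.mulSingle i x) : ℂ) - 1) * c := by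
  refine FreeGroup.induction_on x ?_ h ?_ ?_
  · rw [Pi.mulSingle_one, cf_one, map_one]
    simp
  · intro k _
    have hne : (χ (Pi.mulSingle i (FreeGroup.of k)) : ℂ) ≠ 0 := Units.ne_zero _
    have hu : (χ (Pi.mulSingle i (FreeGroup.of k)) : ℂ) *
        ((χ (Pi.mulSingle i (FreeGroup.of k)) : ℂ))⁻¹ = 1 := mul_inv_cancel₀ hne
    have hk : cf χ f (Pi.mulSingle i (FreeGroup.of k))
        = ((χ (Pi.mulSingle i (FreeGroup.of k)) : ℂ) - 1) * c := h k
    rw [Pi.mulSingle_inv, cocycle_inv, map_inv, hk]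
    simp only [Units.val_inv_eq_inv_val]
    linear_combination -c * hu
  · intro x y hx hy
    rw [Pi.mulSingle_mul, cocycle_mul, hx, hy, map_mul, Units.val_mul]
    ring

theorem ext_of_singles (f : oneCocycles (Rep.of (charRep χ))) (c : ℂ)
    (h : ∀ (i : Fin ℓ) (x : FreeGroup (Fin (n i))),
      cf χ f (Pi.mulSingle i x) = ((χ (Pi.mulSingle i x) : ℂ) - 1) * c)
    (g : ∀ i, FreeGroup (Fin (n i))) :
    cf χ f g = ((χ g : ℂ) - 1) * c := by
  have key := Finset.noncommProd_induction Finset.univ (fun i => Pi.mulSingle i (g i))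
    (fun i _ j _ _ => Pi.mulSingle_apply_commute g i j)
    (fun y => cf χ f y = ((χ y : ℂ) - 1) * c)
    (fun a b ha hb => by
      show cf χ f (a * b) = ((χ (a * b) : ℂ) - 1) * c
      rw [cocycle_mul, ha, hb, map_mul, Units.val_mul]; ring)
    (by show cf χ f 1 = ((χ 1 : ℂ) - 1) * c
        rw [cf_one, map_one]; simp)
    (fun i _ => h i (g i))
  rwa [Finset.noncommProd_mulSingle] at key

theorem chi_eq_prod (g : ∀ i, FreeGroup (Fin (n i))) :
    χ g = ∏ i, χ (Pi.mulSingle i (g i)) := by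
  conv_lhs => rw [← Finset.noncommProd_mulSingle g]
  refine (Finset.map_noncommProd _ _ _ χ).trans ?_
  exact Finset.noncommProd_eq_prod _ _

end Product
end H1Aux

open H1Aux groupCohomology in
theorem h1_product_of_free_groups (ℓ : ℕ) (hℓ : 1 ≤ ℓ) (n : Fin ℓ → ℕ)
    (χ : (∀ i : Fin ℓ, FreeGroup (Fin (n i))) →* ℂˣ)
    (S : Set (Fin ℓ))
    (hS : S = { i : Fin ℓ |
      χ.comp (MonoidHom.mulSingle (fun j : Fin ℓ => FreeGroup (Fin (n j))) i) ≠ 1 }) :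
    (∀ i j : Fin ℓ, i ∈ S → j ∈ S → i ≠ j →
      Subsingleton (groupCohomology.H1 (Rep.of (charRep χ)))) ∧
    (∀ i₀ : Fin ℓ, S = {i₀} →
      Module.finrank ℂ (groupCohomology.H1 (Rep.of (charRep χ))) = n i₀ - 1) ∧
    (S = ∅ →
      Module.finrank ℂ (groupCohomology.H1 (Rep.of (charRep χ))) = ∑ i, n i) := by
  classical
  have hmem : ∀ i : Fin ℓ, i ∈ S ↔
      (χ.comp (MonoidHom.mulSingle (fun j : Fin ℓ => FreeGroup (Fin (n j))) i) ≠ 1) := by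
    intro i; rw [hS]; exact Iff.rfl
  have hcomp : ∀ (i : Fin ℓ) (x : FreeGroup (Fin (n i))),
      χ.comp (MonoidHom.mulSingle (fun j : Fin ℓ => FreeGroup (Fin (n j))) i) x
        = χ (Pi.mulSingle i x) := fun i x => rfl
  have hwit : ∀ i ∈ S, ∃ a, χ (Pi.mulSingle i a) ≠ 1 := by
    intro i hi
    by_contra hcon
    push_neg at hcon
    exact (hmem i).1 hi (MonoidHom.ext fun x => by rw [hcomp]; exact hcon x)
  have htriv : ∀ i ∉ S, ∀ x, (χ (Pi.mulSingle i x) : ℂ) = 1 := by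
    intro i hi x
    have h1 : χ.comp (MonoidHom.mulSingle (fun j : Fin ℓ => FreeGroup (Fin (n j))) i) = 1 :=
      not_not.1 fun hne => hi ((hmem i).2 hne)
    rw [← hcomp i x, h1]
    rfl
  have hrel : ∀ (f : oneCocycles (Rep.of (charRep χ))) (i j : Fin ℓ) (_ : i ≠ j)
      (a : FreeGroup (Fin (n i))) (x : FreeGroup (Fin (n j))),
      (χ (Pi.mulSingle j x) : ℂ) = 1 → χ (Pi.mulSingle i a) ≠ 1 →
      cf χ f (Pi.mulSingle j x) = 0 := by
    intro f i j hij a x hx1 ha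
    have haC : (χ (Pi.mulSingle i a) : ℂ) - 1 ≠ 0 :=
      sub_ne_zero.2 fun hE => ha (Units.ext (by rw [hE]; rfl))
    have hcr := comm_rel f hij a x
    rw [hx1] at hcr
    apply mul_left_cancel₀ haC
    rw [mul_zero]
    linear_combination hcr
  refine ⟨?_, ?_, ?_⟩
  -- Part (a)
  · intro i j hi hj hij
    obtain ⟨a, ha⟩ := hwit i hi
    obtain ⟨b, hb⟩ := hwit j hj
    have haC : (χ (Pi.mulSingle i a) : ℂ) - 1 ≠ 0 :=
      sub_ne_zero.2 fun hE => ha (Units.ext (by rw [hE]; rfl))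
    have hbC : (χ (Pi.mulSingle j b) : ℂ) - 1 ≠ 0 :=
      sub_ne_zero.2 fun hE => hb (Units.ext (by rw [hE]; rfl))
    refine (Equiv.subsingleton_congr (h1Equiv (Rep.of (charRep χ))).toEquiv).1
        (Submodule.Quotient.subsingleton_iff.2 (eq_top_iff.2 fun f _ => ?_))
    set c : ℂ := cf χ f (Pi.mulSingle j b) / ((χ (Pi.mulSingle j b) : ℂ) - 1) with hc
    have step1 : ∀ (i' : Fin ℓ) (_ : i' ≠ j) (x : FreeGroup (Fin (n i'))),
        cf χ f (Pi.mulSingle i' x) = ((χ (Pi.mulSingle i' x) : ℂ) - 1) * c := by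
      intro i' hi' x
      have hcr := comm_rel f hi' x b
      rw [hc, ← mul_div_assoc, eq_div_iff hbC]
      linear_combination -hcr
    have step2 : ∀ x : FreeGroup (Fin (n j)),
        cf χ f (Pi.mulSingle j x) = ((χ (Pi.mulSingle j x) : ℂ) - 1) * c := by
      intro x
      have h1 := comm_rel f hij a x
      have h2 := step1 i hij a
      apply mul_left_cancel₀ haC
      linear_combination h1 + ((χ (Pi.mulSingle j x) : ℂ) - 1) * h2
    have hall : ∀ (i' : Fin ℓ) (x : FreeGroup (Fin (n i'))),
        cf χ f (Pi.mulSingle i' x) = ((χ (Pi.mulSingle i' x) : ℂ) - 1) * c := by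
      intro i' x
      rcases eq_or_ne i' j with rfl | hne
      · exact step2 x
      · exact step1 i' hne x
    exact mem_coboundaries_of_eq f c (ext_of_singles f c hall)
  -- Part (b)
  · intro i₀ hS0
    have hi₀S : i₀ ∈ S := by rw [hS0]; exact rfl
    obtain ⟨a, ha⟩ := hwit i₀ hi₀S
    have haC : (χ (Pi.mulSingle i₀ a) : ℂ) - 1 ≠ 0 :=
      sub_ne_zero.2 fun hE => ha (Units.ext (by rw [hE]; rfl))
    have htrivU : ∀ j : Fin ℓ, j ≠ i₀ → ∀ x, χ (Pi.mulSingle j x) = 1 := by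
      intro j hj x
      have hjS : j ∉ S := by rw [hS0]; simpa using hj
      exact Units.ext (by rw [htriv j hjS x]; rfl)
    have hchi : ∀ g : (∀ i : Fin ℓ, FreeGroup (Fin (n i))),
        χ g = χ (Pi.mulSingle i₀ (g i₀)) := by
      intro g
      rw [chi_eq_prod g]
      exact Finset.prod_eq_single i₀ (fun j _ hjne => htrivU j hjne (g j)) (by simp)
    set Φ : oneCocycles (Rep.of (charRep χ)) →ₗ[ℂ] (Fin (n i₀) → ℂ) :=
      { toFun := fun f k => cf χ f (Pi.mulSingle i₀ (FreeGroup.of k))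
        map_add' := fun f g => rfl
        map_smul' := fun r f => rfl } with hΦ
    have hzero : ∀ f : oneCocycles (Rep.of (charRep χ)), Φ f = 0 → f = 0 := by
      intro f hf
      have hall : ∀ (i : Fin ℓ) (x : FreeGroup (Fin (n i))),
          cf χ f (Pi.mulSingle i x) = ((χ (Pi.mulSingle i x) : ℂ) - 1) * 0 := by
        intro i x
        rw [mul_zero]
        rcases eq_or_ne i i₀ with rfl | hne
        · have := factor_ext f i 0 (fun k => by
            rw [mul_zero]; exact congrFun hf k) x
          rwa [mul_zero] at this
        · exact hrel f i₀ i (Ne.symm hne) a x (by rw [htrivU i hne x]; rfl) ha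
      have hext := ext_of_singles f 0 hall
      apply Subtype.ext
      funext g
      have h2 := hext g
      rw [mul_zero] at h2
      exact h2
    have hinj : Function.Injective Φ := by
      intro f g hfg
      have := hzero (f - g) (by rw [map_sub, hfg, sub_self])
      rwa [sub_eq_zero] at this
    have hsurj : Function.Surjective Φ := by
      intro v
      obtain ⟨f₀, hf₀m, hf₀v⟩ := exists_cocycle
        (χ.comp (MonoidHom.mulSingle (fun j : Fin ℓ => FreeGroup (Fin (n j))) i₀)) v
      refine ⟨mk χ (fun g => f₀ (g i₀)) (fun g h => ?_), ?_⟩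
      · show f₀ (g i₀ * h i₀) = _
        rw [hf₀m, hcomp i₀ (g i₀), ← hchi g]
      · funext k
        show f₀ ((Pi.mulSingle i₀ (FreeGroup.of k) : ∀ j, FreeGroup (Fin (n j))) i₀) = v k
        rw [Pi.mulSingle_eq_same, hf₀v]
    have e : oneCocycles (Rep.of (charRep χ)) ≃ₗ[ℂ] (Fin (n i₀) → ℂ) :=
      LinearEquiv.ofBijective Φ ⟨hinj, hsurj⟩
    haveI hfd : FiniteDimensional ℂ (oneCocycles (Rep.of (charRep χ))) :=
      Module.Finite.equiv e.symm
    have hrkZ : Module.finrank ℂ (oneCocycles (Rep.of (charRep χ))) = n i₀ := by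
      rw [e.finrank_eq, Module.finrank_pi, Fintype.card_fin]
    have hdinj : ∀ c₁ c₂ : ℂ, dZero (Rep.of (charRep χ)) c₁ = dZero (Rep.of (charRep χ)) c₂ →
        c₁ = c₂ := by
      intro c₁ c₂ hcc
      have h12 := congrFun hcc (Pi.mulSingle i₀ a)
      rw [dZero_apply'' χ c₁, dZero_apply'' χ c₂] at h12
      have h12' : (χ (Pi.mulSingle i₀ a) : ℂ) * c₁ - c₁
          = (χ (Pi.mulSingle i₀ a) : ℂ) * c₂ - c₂ := h12
      have hmul : ((χ (Pi.mulSingle i₀ a) : ℂ) - 1) * (c₁ - c₂) = 0 := by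
        linear_combination h12'
      rcases mul_eq_zero.1 hmul with h | h
      · exact absurd h haC
      · exact sub_eq_zero.1 h
    have hB : oneCoboundaries (Rep.of (charRep χ)) = LinearMap.range
        ((dZero (Rep.of (charRep χ))).codRestrict (oneCocycles (Rep.of (charRep χ)))
          fun c => LinearMap.ext_iff.1 (dOne_comp_dZero (Rep.of (charRep χ))) c) := rfl
    have hcodinj : Function.Injective
        ((dZero (Rep.of (charRep χ))).codRestrict (oneCocycles (Rep.of (charRep χ)))
          fun c => LinearMap.ext_iff.1 (dOne_comp_dZero (Rep.of (charRep χ))) c) := by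
      intro c₁ c₂ hcc
      exact hdinj c₁ c₂ (congrArg Subtype.val hcc)
    have hrkB : Module.finrank ℂ (oneCoboundaries (Rep.of (charRep χ))) = 1 := by
      rw [hB, LinearMap.finrank_range_of_inj hcodinj]
      exact Module.finrank_self ℂ
    have key := Submodule.finrank_quotient_add_finrank (oneCoboundaries (Rep.of (charRep χ)))
    rw [hrkB, hrkZ] at key
    rw [← (h1Equiv (Rep.of (charRep χ))).finrank_eq]
    omega
  -- Part (c)
  · intro hS0
    have htrivU : ∀ (i : Fin ℓ) (x : FreeGroup (Fin (n i))), χ (Pi.mulSingle i x) = 1 := by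
      intro i x
      exact Units.ext (by rw [htriv i (by rw [hS0]; exact Set.notMem_empty i) x]; rfl)
    have hχ1 : ∀ g : (∀ i : Fin ℓ, FreeGroup (Fin (n i))), χ g = 1 := by
      intro g
      rw [chi_eq_prod g]
      exact Finset.prod_eq_one fun i _ => htrivU i (g i)
    set Φ : oneCocycles (Rep.of (charRep χ)) →ₗ[ℂ] (∀ i : Fin ℓ, Fin (n i) → ℂ) :=
      { toFun := fun f i k => cf χ f (Pi.mulSingle i (FreeGroup.of k))
        map_add' := fun f g => rfl
        map_smul' := fun r f => rfl } with hΦ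
    have hzero : ∀ f : oneCocycles (Rep.of (charRep χ)), Φ f = 0 → f = 0 := by
      intro f hf
      have hall : ∀ (i : Fin ℓ) (x : FreeGroup (Fin (n i))),
          cf χ f (Pi.mulSingle i x) = ((χ (Pi.mulSingle i x) : ℂ) - 1) * 0 := by
        intro i x
        rw [mul_zero]
        have := factor_ext f i 0 (fun k => by
          rw [mul_zero]; exact congrFun (congrFun hf i) k) x
        rwa [mul_zero] at this
      have hext := ext_of_singles f 0 hall
      apply Subtype.ext
      funext g
      have h2 := hext g
      rw [mul_zero] at h2
      exact h2
    have hinj : Function.Injective Φ := by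
      intro f g hfg
      have := hzero (f - g) (by rw [map_sub, hfg, sub_self])
      rwa [sub_eq_zero] at this
    have hsurj : Function.Surjective Φ := by
      intro v
      have H := fun i : Fin ℓ => exists_cocycle
        (χ.comp (MonoidHom.mulSingle (fun j : Fin ℓ => FreeGroup (Fin (n j))) i)) (v i)
      choose f₀ hmul hval using H
      have hone : ∀ i : Fin ℓ, f₀ i 1 = 0 := by
        intro i
        have := hmul i 1 1
        simpa using this
      refine ⟨mk χ (fun g => ∑ i, f₀ i (g i)) (fun g h => ?_), ?_⟩
      · show (∑ i, f₀ i ((g * h) i)) = _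
        rw [hχ1 g, Units.val_one, one_mul]
        have : ∀ i, f₀ i ((g * h) i) = f₀ i (h i) + f₀ i (g i) := by
          intro i
          show f₀ i (g i * h i) = _
          rw [hmul i (g i) (h i), hcomp i (g i), htrivU i (g i), Units.val_one, one_mul]
        rw [Finset.sum_congr rfl fun i _ => this i, Finset.sum_add_distrib]
      · funext i k
        show (∑ j, f₀ j ((Pi.mulSingle i (FreeGroup.of k) : ∀ j', FreeGroup (Fin (n j'))) j)) = v i k
        rw [Finset.sum_eq_single i (fun j _ hji => by
          rw [Pi.mulSingle_eq_of_ne hji, hone j]) (by simp)]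
        rw [Pi.mulSingle_eq_same, hval]
    have e : oneCocycles (Rep.of (charRep χ)) ≃ₗ[ℂ] (∀ i : Fin ℓ, Fin (n i) → ℂ) :=
      LinearEquiv.ofBijective Φ ⟨hinj, hsurj⟩
    haveI hfd : FiniteDimensional ℂ (oneCocycles (Rep.of (charRep χ))) :=
      Module.Finite.equiv e.symm
    have hrkZ : Module.finrank ℂ (oneCocycles (Rep.of (charRep χ))) = ∑ i, n i := by
      rw [e.finrank_eq, Module.finrank_pi_fintype]
      exact Finset.sum_congr rfl fun i _ => by
        rw [Module.finrank_pi, Fintype.card_fin]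
    have hBbot : oneCoboundaries (Rep.of (charRep χ)) = ⊥ := by
      rw [eq_bot_iff]
      intro x hx
      obtain ⟨c, hcv⟩ := (mem_oneCoboundaries_iff x).1 hx
      have hx0 : ∀ g, cf χ x g = 0 := by
        intro g
        have hg := hcv g
        rw [ρ_apply, hχ1 g, Units.val_one, one_mul, sub_self] at hg
        exact hg.symm
      exact (Submodule.mem_bot ℂ).2 (Subtype.ext (funext hx0))
    have hrkB : Module.finrank ℂ (oneCoboundaries (Rep.of (charRep χ))) = 0 := by
      rw [hBbot]; exact finrank_bot ℂ _
    have key := Submodule.finrank_quotient_add_finrank (oneCoboundaries (Rep.of (charRep χ)))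
    rw [hrkB, hrkZ] at key
    rw [← (h1Equiv (Rep.of (charRep χ))).finrank_eq]
    omega
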